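/- Let f : ℕ → ℕ be an additive function (f(1) = 0 and f(ab) = f(a) + f(b) whenever gcd(a,b) = 1) with f(p) ≥ 1 for every prime p and f(p^{k-1}) ≤ f(p^k) for every prime p and integer k ≥ 1. Then every positive integer is f-practical if and only if f(p^k) ≤ 1 + ∑_{i=0}^{k-1} f(p^i) holds for every prime p and every integer k ≥ 1. -/

import Mathlib

open Finset

def Sf (f : ℕ → ℕ) (n : ℕ) : ℕ := ∑ d ∈ n.divisors, f d

def FPractical (f : ℕ → ℕ) (n : ℕ) : Prop :=
  0 < n ∧ ∀ m : ℕ, 0 < m → m ≤ Sf f n →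
    ∃ D : Finset ℕ, D ⊆ n.divisors ∧ m = ∑ d ∈ D, f d

def WeaklyFPractical (f : ℕ → ℕ) (n : ℕ) : Prop :=
  0 < n ∧ ∃ l : List ℕ,
    l.Nodup ∧
    l.toFinset = n.primeFactors ∧
    l.Pairwise (fun p q => f p ≤ f q) ∧
    ∀ i : Fin l.length,
      f (l.get i) ≤ Sf f (((l.take i).map fun p => p ^ n.factorization p).prod) + 1

def Complete (f : ℕ → ℕ) (D : Finset ℕ) : Prop :=
  ∀ m : ℕ, m ≤ ∑ d ∈ D, f d → ∃ T : Finset ℕ, T ⊆ D ∧ m = ∑ d ∈ T, f d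

lemma complete_insert (f : ℕ → ℕ) {D : Finset ℕ} {a : ℕ} (h : Complete f D)
    (ha : a ∉ D) (hfa : f a ≤ 1 + ∑ d ∈ D, f d) : Complete f (insert a D) := by
  intro m hm
  rw [Finset.sum_insert ha] at hm
  by_cases hc : m ≤ ∑ d ∈ D, f d
  · obtain ⟨T, hT, hs⟩ := h m hc
    exact ⟨T, hT.trans (Finset.subset_insert a D), hs⟩
  · obtain ⟨T, hT, hs⟩ := h (m - f a) (by omega)
    refine ⟨insert a T, Finset.insert_subset_insert a hT, ?_⟩
    rw [Finset.sum_insert (fun hmem => ha (hT hmem)), ← hs]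
    omega

lemma complete_union (f : ℕ → ℕ) {D : Finset ℕ} (h : Complete f D) :
    ∀ E : Finset ℕ, (∀ a ∈ E, f a ≤ 1 + ∑ d ∈ D, f d) → Disjoint D E →
      Complete f (D ∪ E) := by
  intro E
  induction E using Finset.induction_on with
  | empty => intro _ _; simpa using h
  | @insert a E' haE ih =>
    intro hE hdisj
    have hD : D ∪ insert a E' = insert a (D ∪ E') := by
      ext x; simp [or_comm, or_assoc, or_left_comm]
    rw [hD]
    have hdisj' : Disjoint D E' := hdisj.mono_right (Finset.subset_insert a E')
    have haD : a ∉ D := fun hx => Finset.disjoint_left.mp hdisj hx (Finset.mem_insert_self a E')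
    refine complete_insert f (ih (fun b hb => hE b (Finset.mem_insert_of_mem hb)) hdisj')
      (by simp [haD, haE]) ?_
    calc f a ≤ 1 + ∑ d ∈ D, f d := hE a (Finset.mem_insert_self a E')
      _ ≤ 1 + ∑ d ∈ D ∪ E', f d := by
          have := Finset.sum_le_sum_of_subset (f := f) (Finset.subset_union_left (s₁ := D) (s₂ := E'))
          omega

lemma one_le_f_pow (f : ℕ → ℕ)
    (hfp : ∀ p : ℕ, p.Prime → 1 ≤ f p)
    (hmono : ∀ p k : ℕ, p.Prime → 1 ≤ k → f (p ^ (k - 1)) ≤ f (p ^ k))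
    {p : ℕ} (hp : p.Prime) : ∀ {k : ℕ}, 1 ≤ k → 1 ≤ f (p ^ k) := by
  intro k
  induction k with
  | zero => omega
  | succ n ih =>
    intro _
    have h2 := hmono p (n + 1) hp (by omega)
    simp only [Nat.add_sub_cancel] at h2
    rcases Nat.eq_zero_or_pos n with h | h
    · subst h; simpa using hfp p hp
    · exact (ih h).trans h2

lemma complete_pow_mul (f : ℕ → ℕ) (hf1 : f 1 = 0)
    (hadd : ∀ a b : ℕ, Nat.Coprime a b → f (a * b) = f a + f b)
    (hcond : ∀ p k : ℕ, p.Prime → 1 ≤ k →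
      f (p ^ k) ≤ 1 + ∑ i ∈ Finset.range k, f (p ^ i))
    {p n' : ℕ} (hp : p.Prime) (hn' : 0 < n') (hpn' : ¬ p ∣ n')
    (h : Complete f n'.divisors) : ∀ k : ℕ, Complete f (p ^ k * n').divisors := by
  intro k
  induction k with
  | zero => simpa using h
  | succ k ih =>
    have hppos : 0 < p := hp.pos
    have hne : p ^ k * n' ≠ 0 := by positivity
    have hne' : p ^ (k + 1) * n' ≠ 0 := by positivity
    have hcop : Nat.Coprime p n' := (Nat.Prime.coprime_iff_not_dvd hp).mpr hpn'
    set E : Finset ℕ := n'.divisors.image (fun d => p ^ (k + 1) * d) with hE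
    -- the decomposition
    have hdecomp : (p ^ (k + 1) * n').divisors = (p ^ k * n').divisors ∪ E := by
      ext x
      simp only [Nat.mem_divisors, Finset.mem_union, hE, Finset.mem_image]
      constructor
      · rintro ⟨hx, -⟩
        obtain ⟨a, b, ha, hb, rfl⟩ := exists_dvd_and_dvd_of_dvd_mul hx
        obtain ⟨i, hi, rfl⟩ := (Nat.dvd_prime_pow hp).mp ha
        rcases Nat.lt_or_ge i (k + 1) with hik | hik
        · exact Or.inl ⟨mul_dvd_mul (pow_dvd_pow p (by omega)) hb, hne⟩
        · have : i = k + 1 := by omega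
          subst this
          exact Or.inr ⟨b, ⟨hb, by omega⟩, rfl⟩
      · rintro (⟨hx, -⟩ | ⟨b, hb, rfl⟩)
        · exact ⟨hx.trans (mul_dvd_mul (pow_dvd_pow p (by omega)) dvd_rfl), hne'⟩
        · exact ⟨mul_dvd_mul dvd_rfl hb.1, hne'⟩
    have hdisj : Disjoint (p ^ k * n').divisors E := by
      rw [Finset.disjoint_left]
      rintro x hx hxE
      obtain ⟨b, hb, rfl⟩ := Finset.mem_image.mp hxE
      have hdvd : p ^ (k + 1) ∣ p ^ k * n' :=
        (dvd_mul_right (p ^ (k + 1)) b).trans (Nat.mem_divisors.mp hx).1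
      rw [pow_succ, mul_comm (p ^ k) p] at hdvd
      rw [mul_comm (p ^ k) n'] at hdvd
      exact hpn' ((Nat.mul_dvd_mul_iff_right (pow_pos hppos k)).mp hdvd)
    have hbound : ∀ a ∈ E, f a ≤ 1 + ∑ d ∈ (p ^ k * n').divisors, f d := by
      rintro a haE
      obtain ⟨d, hd, rfl⟩ := Finset.mem_image.mp haE
      have hdn' : d ∣ n' := (Nat.mem_divisors.mp hd).1
      have hcopd : Nat.Coprime (p ^ (k + 1)) d :=
        Nat.Coprime.pow_left _ (Nat.Coprime.coprime_dvd_right hdn' hcop)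
      rw [hadd _ _ hcopd]
      have h1 : f (p ^ (k + 1)) ≤ 1 + ∑ i ∈ Finset.range (k + 1), f (p ^ i) :=
        hcond p (k + 1) hp (by omega)
      -- subset of divisors: p^0,...,p^k and d
      have hsub : ∑ i ∈ Finset.range (k + 1), f (p ^ i) + f d ≤
          ∑ x ∈ (p ^ k * n').divisors, f x := by
        set A : Finset ℕ := (Finset.range (k + 1)).image (p ^ ·) with hA
        have hinj : Set.InjOn (p ^ ·) (Finset.range (k + 1)) :=
          fun a _ b _ hab => Nat.pow_right_injective hp.two_le hab
        have hAsum : ∑ x ∈ A, f x = ∑ i ∈ Finset.range (k + 1), f (p ^ i) :=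
          Finset.sum_image (fun a ha b hb => hinj ha hb)
        have hAsub : A ⊆ (p ^ k * n').divisors := by
          intro x hx
          obtain ⟨i, hi, rfl⟩ := Finset.mem_image.mp hx
          exact Nat.mem_divisors.mpr
            ⟨(pow_dvd_pow p (by simp at hi; omega)).trans (dvd_mul_right _ _), hne⟩
        rcases eq_or_ne d 1 with rfl | hd1
        · rw [hf1]
          simpa [hAsum] using Finset.sum_le_sum_of_subset (f := f) hAsub
        · have hdA : d ∉ A := by
            intro hdm
            obtain ⟨i, hi, hdi⟩ := Finset.mem_image.mp hdm
            rcases Nat.eq_zero_or_pos i with rfl | hipos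
            · simp at hdi; omega
            · have : p ∣ d := hdi ▸ dvd_pow_self p (by omega)
              exact hpn' (this.trans hdn')
          have hsub2 : insert d A ⊆ (p ^ k * n').divisors := by
            refine Finset.insert_subset (Nat.mem_divisors.mpr
              ⟨hdn'.trans (dvd_mul_left n' (p ^ k)), hne⟩) hAsub
          have := Finset.sum_le_sum_of_subset (f := f) hsub2
          rw [Finset.sum_insert hdA, hAsum] at this
          omega
      omega
    rw [hdecomp]
    exact complete_union f ih E hbound hdisj

lemma complete_all (f : ℕ → ℕ) (hf1 : f 1 = 0)
    (hadd : ∀ a b : ℕ, Nat.Coprime a b → f (a * b) = f a + f b)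
    (hcond : ∀ p k : ℕ, p.Prime → 1 ≤ k →
      f (p ^ k) ≤ 1 + ∑ i ∈ Finset.range k, f (p ^ i)) :
    ∀ n : ℕ, 0 < n → Complete f n.divisors := by
  intro n
  induction n using Nat.strong_induction_on with
  | _ n ih =>
    intro hn
    rcases eq_or_lt_of_le (Nat.succ_le_of_lt hn) with h1 | h1
    · intro m hm
      rw [← h1] at hm ⊢
      simp [Nat.divisors_one, hf1] at hm
      exact ⟨∅, by simp [hm]⟩
    · set p := n.minFac with hpdef
      have hp : p.Prime := Nat.minFac_prime (by omega)
      have hpd : p ∣ n := Nat.minFac_dvd n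
      set n' := ordCompl[p] n with hn'def
      have hn'pos : 0 < n' := Nat.ordCompl_pos p (by omega)
      have hpn' : ¬ p ∣ n' := Nat.not_dvd_ordCompl hp (by omega)
      have hlt : n' < n := by
        have hdvd : n' ∣ n := Nat.ordCompl_dvd n p
        rcases lt_or_eq_of_le (Nat.le_of_dvd hn hdvd) with h | h
        · exact h
        · exact absurd (h ▸ hpn') (by simpa using hpd)
      have hC := complete_pow_mul f hf1 hadd hcond hp hn'pos hpn' (ih n' hlt hn'pos)
        (n.factorization p)
      rwa [Nat.ordProj_mul_ordCompl_eq_self] at hC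

/-- For additive f, every positive integer is f-practical iff
f(p^k) ≤ 1 + ∑_{i=0}^{k-1} f(p^i) for every prime p and k ≥ 1. -/
theorem stmt18 (f : ℕ → ℕ) (hf1 : f 1 = 0)
    (hadd : ∀ a b : ℕ, Nat.Coprime a b → f (a * b) = f a + f b)
    (hfp : ∀ p : ℕ, p.Prime → 1 ≤ f p)
    (hmono : ∀ p k : ℕ, p.Prime → 1 ≤ k → f (p ^ (k - 1)) ≤ f (p ^ k)) :
    (∀ n : ℕ, 0 < n → FPractical f n) ↔
      ∀ p k : ℕ, p.Prime → 1 ≤ k →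
        f (p ^ k) ≤ 1 + ∑ i ∈ Finset.range k, f (p ^ i) := by
  constructor
  · intro H p k hp hk
    by_contra hcon
    push_neg at hcon
    set m := 1 + ∑ i ∈ Finset.range k, f (p ^ i) with hm
    have hSf : Sf f (p ^ k) = ∑ i ∈ Finset.range (k + 1), f (p ^ i) := by
      rw [Sf, Nat.divisors_prime_pow hp, Finset.sum_map]
      rfl
    have hfk1 : 1 ≤ f (p ^ k) := one_le_f_pow f hfp hmono hp hk
    have hmle : m ≤ Sf f (p ^ k) := by
      rw [hSf, Finset.sum_range_succ]; omega
    obtain ⟨D, hD, hsum⟩ := (H (p ^ k) (pow_pos hp.pos k)).2 m (by omega) hmle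
    by_cases hpk : p ^ k ∈ D
    · have : f (p ^ k) ≤ ∑ d ∈ D, f d :=
        Finset.single_le_sum (fun i _ => Nat.zero_le (f i)) hpk
      omega
    · have hDsub : D ⊆ (Finset.range k).image (p ^ ·) := by
        intro x hx
        have hx' := hD hx
        rw [Nat.divisors_prime_pow hp, Finset.mem_map] at hx'
        obtain ⟨i, hi, rfl⟩ := hx'
        simp only [Finset.mem_range] at hi
        refine Finset.mem_image.mpr ⟨i, Finset.mem_range.mpr ?_, rfl⟩
        rcases Nat.lt_or_ge i k with h | h
        · exact h
        · exfalso; apply hpk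
          have : i = k := by omega
          subst this
          exact hx
      have hle : ∑ d ∈ D, f d ≤ ∑ i ∈ Finset.range k, f (p ^ i) := by
        have h1 := Finset.sum_le_sum_of_subset (f := f) hDsub
        rwa [Finset.sum_image (fun a _ b _ hab =>
          Nat.pow_right_injective hp.two_le hab)] at h1
      omega
  · intro hcond n hn
    refine ⟨hn, fun m _ hmle => ?_⟩
    exact complete_all f hf1 hadd hcond n hn m hmle
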